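/- Let n be odd and k = n−1, and define Z_d(a) = Σ_M (-1)^M · T_d(φ⁺(M); a), summing over all maximal matchings M on {1,...,n}, where φ⁺(M) is the set of vectors (e_{i_r}±e_{j_r})/√2 for the edges (i_r,j_r) of M, and (-1)^M is the sign (-1)^{cross(M)+p-1} with p the isolated vertex. Then Z_d is a polynomial in the squared variables a_1², ..., a_n², and every monomial of Z_d with nonzero coefficient omits at least one variable (has at least one exponent equal to zero). -/

import Mathlib

open Finset

/-- The polynomial `T_{2m+k}(x_1,…,x_k) = c_m Σ_{r_1+⋯+r_k=m} (m choose r_1,…,r_k)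
∏_i x_i^{2r_i+1}/(2r_i+1)` of the paper, where `c_m = (-1)^m binom((n-k)/2, m)` and the
`k` variables are indexed by a finite type `ι` with `k = |ι|`. -/
noncomputable def Tpoly (n : ℕ) (ι : Type*) [Fintype ι] [DecidableEq ι] (m : ℕ)
    (x : ι → ℝ) : ℝ :=
  ((-1 : ℝ) ^ m *
      ((∏ j ∈ Finset.range m, (((n : ℝ) - (Fintype.card ι : ℝ)) / 2 - j)) /
        (Nat.factorial m))) *
    ∑ r ∈ (Fintype.piFinset fun _ : ι => Finset.range (m + 1)).filter
        (fun r => ∑ i, r i = m),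
      (Nat.multinomial Finset.univ r : ℝ) * ∏ i, x i ^ (2 * r i + 1) / (2 * r i + 1 : ℝ)

open scoped RealInnerProductSpace

/-- Maximal matchings on `{1,…,n}` (for `n` odd), encoded as involutions of `Fin n`
with exactly one fixed point; the edges are the 2-element orbits. -/
def maximalMatchings (n : ℕ) : Finset (Equiv.Perm (Fin n)) :=
  Finset.univ.filter fun σ =>
    σ * σ = 1 ∧ (Finset.univ.filter fun i => σ i = i).card = 1

/-- The number of crossings of the matching encoded by the involution `σ`: pairs of
edges `{i < σ i}`, `{j < σ j}` with `i < j < σ i < σ j`. -/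
def matchingCross {n : ℕ} (σ : Equiv.Perm (Fin n)) : ℕ :=
  (Finset.univ.filter fun p : Fin n × Fin n =>
    p.1 < σ p.1 ∧ p.2 < σ p.2 ∧ p.1 < p.2 ∧ p.2 < σ p.1 ∧ σ p.1 < σ p.2).card

/-- `p - 1` for the isolated vertex `p` of the matching (in one-based labelling), i.e.
the sum of the (zero-based) fixed points of `σ`. -/
def matchingIsolated {n : ℕ} (σ : Equiv.Perm (Fin n)) : ℕ :=
  ∑ i ∈ Finset.univ.filter (fun i => σ i = i), (i : ℕ)

/-- The pseudo-roots `(e_i ± e_{σ i})/√2`, over the edges `{i < σ i}` of the matching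
encoded by `σ`, forming the positive system `φ⁺(M)` of the `2`-structure of type
`A_1^{n-1}` in `D_n`. -/
noncomputable def matchingVec {n : ℕ} (σ : Equiv.Perm (Fin n))
    (x : {i : Fin n // i < σ i} × Bool) : EuclideanSpace ℝ (Fin n) :=
  (Real.sqrt 2)⁻¹ •
    (EuclideanSpace.single x.1.1 (1 : ℝ) +
      (if x.2 then (1 : ℝ) else -1) • EuclideanSpace.single (σ x.1.1) (1 : ℝ))

namespace ZAux
open MvPolynomial

lemma multinomial_comp_equiv {ι : Type*} [Fintype ι] [DecidableEq ι] (g : Equiv.Perm ι)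
    (r : ι → ℕ) :
    Nat.multinomial Finset.univ (fun i => r (g i)) = Nat.multinomial Finset.univ r := by
  unfold Nat.multinomial
  rw [Equiv.sum_comp g r, Equiv.prod_comp g (fun i => Nat.factorial (r i))]

lemma Tpoly_equiv_sign {ι : Type*} [Fintype ι] [DecidableEq ι] (n m : ℕ)
    (g : Equiv.Perm ι) (ε : ι → ℝ) (hε : ∀ i, ε i = 1 ∨ ε i = -1)
    (hprod : ∏ i, ε i = 1) (y : ι → ℝ) :
    Tpoly n ι m (fun i => ε i * y (g i)) = Tpoly n ι m y := by
  unfold Tpoly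
  congr 1
  refine Finset.sum_equiv (Equiv.arrowCongr g (Equiv.refl ℕ)) ?_ ?_
  · intro r
    simp only [Finset.mem_filter, Fintype.mem_piFinset, Equiv.arrowCongr_apply,
      Equiv.coe_refl, Function.comp, id_eq, Finset.mem_range]
    constructor
    · rintro ⟨h1, h2⟩
      exact ⟨fun i => h1 _, by rw [Equiv.sum_comp g.symm r]; exact h2⟩
    · rintro ⟨h1, h2⟩
      refine ⟨fun i => by simpa using h1 (g i), ?_⟩
      rw [Equiv.sum_comp g.symm r] at h2; exact h2
  · intro r hr
    simp only [Equiv.arrowCongr_apply, Equiv.coe_refl, Function.comp, id_eq]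
    have hm : Nat.multinomial Finset.univ (fun i => r (g.symm i))
        = Nat.multinomial Finset.univ r := multinomial_comp_equiv g.symm r
    rw [show ((Equiv.arrowCongr g (Equiv.refl ℕ)) r) = fun i => r (g.symm i) from rfl, hm]
    congr 1
    have hsplit : ∀ i : ι, (ε i * y (g i)) ^ (2 * r i + 1) / (2 * r i + 1 : ℝ)
        = ε i * (y (g i) ^ (2 * r i + 1) / (2 * r i + 1 : ℝ)) := by
      intro i
      rcases hε i with h | h <;> rw [h, mul_pow]
      · rw [one_pow]; ring
      · rw [Odd.neg_one_pow ⟨r i, by ring⟩]; ring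
    rw [Finset.prod_congr rfl fun i _ => hsplit i, Finset.prod_mul_distrib, hprod, one_mul]
    have := (Equiv.prod_comp g.symm
      (fun i => y (g i) ^ (2 * r i + 1) / (2 * r i + 1 : ℝ))).symm
    simpa using this

variable {n : ℕ}

lemma eval_bind₁' (f : Fin n → MvPolynomial (Fin n) ℝ) (Q : MvPolynomial (Fin n) ℝ)
    (a : Fin n → ℝ) :
    eval a (bind₁ f Q) = eval (fun i => eval a (f i)) Q :=
  eval₂Hom_bind₁ (RingHom.id ℝ) a f Q

lemma monomial_eq_prod (d' : Fin n →₀ ℕ) (c : ℝ) :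
    (monomial d') c = C c * ∏ i ∈ d'.support, (X i : MvPolynomial (Fin n) ℝ) ^ d' i := by
  rw [monomial_eq]; rfl

lemma coeff_bind₁_flip (j : Fin n) (Q : MvPolynomial (Fin n) ℝ) (d : Fin n →₀ ℕ) :
    coeff d (bind₁ (fun i : Fin n => if i = j then -X i else X i) Q)
      = (-1 : ℝ) ^ (d j) * coeff d Q := by
  have key : ∀ (d' : Fin n →₀ ℕ) (c : ℝ),
      bind₁ (fun i : Fin n => if i = j then -X i else X i) (monomial d' c)
        = C ((-1 : ℝ) ^ (d' j)) * monomial d' c := by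
    intro d' c
    rw [bind₁_monomial]
    have h1 : ∀ i ∈ d'.support, (if i = j then -X i else X i : MvPolynomial (Fin n) ℝ) ^ d' i
        = C (if i = j then ((-1 : ℝ) ^ (d' i)) else 1) * (X i ^ d' i) := by
      intro i _
      split
      · rw [show (-X i : MvPolynomial (Fin n) ℝ) = C (-1 : ℝ) * X i by
          rw [map_neg, C_1, neg_mul, one_mul], mul_pow, ← C_pow]
      · rw [C_1, one_mul]
    rw [Finset.prod_congr rfl h1, Finset.prod_mul_distrib, ← map_prod,
      Finset.prod_ite_eq' d'.support j (fun i => ((-1 : ℝ) ^ (d' i)))]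
    have h2 : (if j ∈ d'.support then (-1 : ℝ) ^ (d' j) else 1) = (-1 : ℝ) ^ (d' j) := by
      split
      · rfl
      · rw [Finsupp.notMem_support_iff.mp ‹_›, pow_zero]
    rw [h2, monomial_eq_prod]
    ring
  conv_lhs => rw [Q.as_sum, map_sum]
  rw [coeff_sum]
  have h3 : ∀ d' ∈ Q.support,
      coeff d (bind₁ (fun i : Fin n => if i = j then -X i else X i)
        (monomial d' (coeff d' Q)))
      = if d' = d then (-1 : ℝ) ^ (d j) * coeff d' Q else 0 := by
    intro d' _
    rw [key, coeff_C_mul, coeff_monomial]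
    split
    · subst ‹d' = d›; rfl
    · rw [mul_zero]
  rw [Finset.sum_congr rfl h3, Finset.sum_ite_eq' Q.support d
    (fun d' => (-1 : ℝ) ^ (d j) * coeff d' Q)]
  split
  · rfl
  · rw [MvPolynomial.notMem_support_iff.mp ‹_›, mul_zero]

lemma coeff_bind₁_zero (p : Fin n) (Q : MvPolynomial (Fin n) ℝ) (d : Fin n →₀ ℕ)
    (hd : d p ≠ 0) :
    coeff d (bind₁ (fun i : Fin n => if i = p then 0 else X i) Q) = 0 := by
  have key : ∀ (d' : Fin n →₀ ℕ) (c : ℝ),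
      coeff d (bind₁ (fun i : Fin n => if i = p then 0 else X i) (monomial d' c)) = 0 := by
    intro d' c
    rw [bind₁_monomial]
    by_cases hp : p ∈ d'.support
    · rw [Finset.prod_eq_zero hp (by
        rw [if_pos rfl]; exact zero_pow (Finsupp.mem_support_iff.mp hp)), mul_zero]
      exact coeff_zero d
    · have h1 : ∀ i ∈ d'.support, (if i = p then 0 else X i : MvPolynomial (Fin n) ℝ) ^ d' i
          = X i ^ d' i := by
        intro i hi
        rw [if_neg (by rintro rfl; exact hp hi)]
      rw [Finset.prod_congr rfl h1, ← monomial_eq_prod, coeff_monomial, if_neg]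
      rintro rfl
      exact hd (Finsupp.notMem_support_iff.mp hp)
  conv_lhs => rw [Q.as_sum, map_sum, coeff_sum]
  exact Finset.sum_eq_zero fun d' _ => key d' (coeff d' Q)

noncomputable def halve (Q : MvPolynomial (Fin n) ℝ) : MvPolynomial (Fin n) ℝ :=
  ∑ d ∈ Q.support, monomial (Finsupp.mapRange (· / 2) (Nat.zero_div 2) d) (coeff d Q)

lemma eval_halve (Q : MvPolynomial (Fin n) ℝ)
    (heven : ∀ d ∈ Q.support, ∀ j, Even (d j)) (a : Fin n → ℝ) :
    eval (fun i => a i ^ 2) (halve Q) = eval a Q := by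
  conv_rhs => rw [Q.as_sum]
  rw [halve, map_sum, map_sum]
  refine Finset.sum_congr rfl fun d hd => ?_
  rw [eval_monomial, eval_monomial, Finsupp.prod_pow, Finsupp.prod_pow]
  congr 1
  refine Finset.prod_congr rfl fun i _ => ?_
  rw [Finsupp.mapRange_apply, ← pow_mul]
  congr 1
  obtain ⟨c, hc⟩ := heven d hd i
  omega

lemma support_halve (Q : MvPolynomial (Fin n) ℝ) (mo : Fin n →₀ ℕ)
    (hmo : mo ∈ (halve Q).support) :
    ∃ d ∈ Q.support, mo = Finsupp.mapRange (· / 2) (Nat.zero_div 2) d := by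
  classical
  have := MvPolynomial.support_sum hmo
  obtain ⟨d, hd, hmo'⟩ := Finset.mem_biUnion.mp this
  refine ⟨d, hd, ?_⟩
  have := MvPolynomial.support_monomial_subset hmo'
  simpa using this

/-- The inner products `⟪(e_i ± e_{σ i})/√2, a⟫` as explicit functions. -/
noncomputable def ip (σ : Equiv.Perm (Fin n)) (a : Fin n → ℝ)
    (x : {i : Fin n // i < σ i} × Bool) : ℝ :=
  (Real.sqrt 2)⁻¹ * (a x.1.1 + (if x.2 then (1 : ℝ) else -1) * a (σ x.1.1))

lemma inner_eq_ip (σ : Equiv.Perm (Fin n)) (a : EuclideanSpace ℝ (Fin n))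
    (x : {i : Fin n // i < σ i} × Bool) :
    ⟪matchingVec σ x, a⟫ = ip σ (fun i => a i) x := by
  obtain ⟨e, b⟩ := x
  cases b <;>
    simp [matchingVec, ip, inner_add_left, real_inner_smul_left,
      EuclideanSpace.inner_single_left, inner_neg_left] <;> ring

/-- The involution of `E × Bool` flipping the Bool coordinate above `e₀`. -/
def flipAt {E : Type*} [DecidableEq E] (e₀ : E) : Equiv.Perm (E × Bool) where
  toFun x := if x.1 = e₀ then (x.1, !x.2) else x
  invFun x := if x.1 = e₀ then (x.1, !x.2) else x
  left_inv x := by obtain ⟨x1, x2⟩ := x; by_cases h : x1 = e₀ <;> simp [h]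
  right_inv x := by obtain ⟨x1, x2⟩ := x; by_cases h : x1 = e₀ <;> simp [h]

lemma flipAt_apply {E : Type*} [DecidableEq E] (e₀ : E) (x : E × Bool) :
    flipAt e₀ x = if x.1 = e₀ then (x.1, !x.2) else x := rfl

lemma prod_sign_flipAt {E : Type*} [DecidableEq E] [Fintype E] (e₀ : E) (s : ℝ)
    (hs : s = 1 ∨ s = -1) :
    ∏ x : E × Bool, (if x.1 = e₀ then s else 1) = 1 := by
  rw [Fintype.prod_prod_type]
  have h : ∀ e : E, ∏ b : Bool, (if (e, b).1 = e₀ then s else 1) = 1 := by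
    intro e
    rw [Fintype.prod_bool]
    rcases hs with h | h <;> subst h <;> split <;> norm_num
  rw [Finset.prod_congr rfl fun e _ => h e, Finset.prod_const_one]

lemma untouched (σ : Equiv.Perm (Fin n)) (hinv : ∀ i, σ (σ i) = i) (j : Fin n)
    (hj : σ j = j) (x : {i : Fin n // i < σ i} × Bool) : x.1.1 ≠ j ∧ σ x.1.1 ≠ j := by
  constructor
  · rintro h
    exact absurd (h ▸ hj) (ne_of_gt (h ▸ x.1.2))
  · intro h
    have h2 : x.1.1 = j := by rw [← hinv x.1.1, h, hj]
    exact absurd (h2 ▸ hj) (ne_of_gt (h2 ▸ x.1.2))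

lemma ip_fix (σ : Equiv.Perm (Fin n)) (hinv : ∀ i, σ (σ i) = i)
    (p : Fin n) (hp : σ p = p) (a : Fin n → ℝ) :
    ip σ (fun i => if i = p then 0 else a i) = ip σ a := by
  funext x
  obtain ⟨h1, h2⟩ := untouched σ hinv p hp x
  simp only [ip, if_neg h1, if_neg h2]

lemma Tpoly_ip_flip (m : ℕ) (σ : Equiv.Perm (Fin n)) (hinv : ∀ i, σ (σ i) = i)
    (j : Fin n) (a : Fin n → ℝ) :
    Tpoly n ({i : Fin n // i < σ i} × Bool) m (ip σ (fun i => if i = j then -a j else a i))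
      = Tpoly n ({i : Fin n // i < σ i} × Bool) m (ip σ a) := by
  by_cases hj : σ j = j
  · congr 1
    funext x
    obtain ⟨h1, h2⟩ := untouched σ hinv j hj x
    simp only [ip, if_neg h1, if_neg h2]
  by_cases hlt : j < σ j
  · set e₀ : {i : Fin n // i < σ i} := ⟨j, hlt⟩ with he₀
    have key : ip σ (fun i => if i = j then -a j else a i)
        = fun x => (if x.1 = e₀ then (-1 : ℝ) else 1) * ip σ a (flipAt e₀ x) := by
      funext x
      by_cases hx : x.1 = e₀
      · have hxj : x.1.1 = j := by rw [hx]
        have hσx : σ x.1.1 ≠ j := by rw [hxj]; exact fun h => hj h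
        simp only [flipAt_apply, if_pos hx, ip, if_pos hxj, if_neg hσx, hxj]
        obtain ⟨x1, x2⟩ := x
        cases x2 <;> simp [hj] <;> ring
      · have h1 : x.1.1 ≠ j := fun h => hx (Subtype.ext h)
        have h2 : σ x.1.1 ≠ j := by
          intro h
          have h3 : x.1.1 = σ j := by rw [← h, hinv]
          have h4 := x.1.2
          rw [h3, hinv] at h4
          omega
        simp only [flipAt_apply, if_neg hx, ip, if_neg h1, if_neg h2, one_mul]
    rw [key]
    exact Tpoly_equiv_sign n m (flipAt e₀) _ (fun x => by split <;> simp)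
      (prod_sign_flipAt e₀ (-1) (Or.inr rfl)) (ip σ a)
  · have hlt2 : σ j < σ (σ j) := by rw [hinv]; omega
    set e₀ : {i : Fin n // i < σ i} := ⟨σ j, hlt2⟩ with he₀
    have key : ip σ (fun i => if i = j then -a j else a i)
        = fun x => (if x.1 = e₀ then (1 : ℝ) else 1) * ip σ a (flipAt e₀ x) := by
      funext x
      by_cases hx : x.1 = e₀
      · have hxj : x.1.1 = σ j := by rw [hx]
        have hne : x.1.1 ≠ j := by rw [hxj]; exact fun h => hj h
        have hσx : σ x.1.1 = j := by rw [hxj, hinv]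
        simp only [flipAt_apply, if_pos hx, ip, if_neg hne, if_pos hσx, hxj, hσx, if_pos rfl]
        obtain ⟨x1, x2⟩ := x
        simp only [he₀] at hxj hσx ⊢
        cases x2 <;> simp [ip, hinv, hj] <;> ring
      · have h1 : x.1.1 ≠ j := by
          intro h
          have : σ x.1.1 < x.1.1 := by rw [h]; omega
          exact absurd x.1.2 (by omega)
        have h2 : σ x.1.1 ≠ j := by
          intro h
          have h3 : x.1.1 = σ j := by rw [← h, hinv]
          exact hx (Subtype.ext h3)
        simp only [flipAt_apply, if_neg hx, ip, if_neg h1, if_neg h2, one_mul]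
    rw [key]
    exact Tpoly_equiv_sign n m (flipAt e₀) _ (fun x => by split <;> simp)
      (prod_sign_flipAt e₀ 1 (Or.inl rfl)) (ip σ a)

noncomputable def Qpoly (σ : Equiv.Perm (Fin n)) (m : ℕ) : MvPolynomial (Fin n) ℝ :=
  C ((-1 : ℝ) ^ m *
      ((∏ j ∈ Finset.range m,
          (((n : ℝ) - (Fintype.card ({i : Fin n // i < σ i} × Bool) : ℝ)) / 2 - j)) /
        (Nat.factorial m))) *
    ∑ r ∈ (Fintype.piFinset
        fun _ : {i : Fin n // i < σ i} × Bool => Finset.range (m + 1)).filter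
        (fun r => ∑ i, r i = m),
      C ((Nat.multinomial Finset.univ r : ℝ)) *
        ∏ x, (C ((Real.sqrt 2)⁻¹) *
            (X x.1.1 + C (if x.2 then (1 : ℝ) else -1) * X (σ x.1.1))) ^ (2 * r x + 1)
          * C ((2 * r x + 1 : ℝ))⁻¹

lemma eval_Qpoly (σ : Equiv.Perm (Fin n)) (m : ℕ) (a : Fin n → ℝ) :
    eval a (Qpoly σ m) = Tpoly n ({i : Fin n // i < σ i} × Bool) m (ip σ a) := by
  rw [Qpoly, Tpoly, map_mul, eval_C, map_sum]
  congr 1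
  refine Finset.sum_congr rfl fun r hr => ?_
  rw [map_mul, eval_C, map_prod]
  congr 1
  refine Finset.prod_congr rfl fun x _ => ?_
  rw [map_mul, map_pow, map_mul, eval_C, map_add, eval_X, map_mul, eval_C, eval_X, eval_C]
  simp only [ip, div_eq_mul_inv]

lemma key (m : ℕ) (σ : Equiv.Perm (Fin n)) :
    ∃ Qh : MvPolynomial (Fin n) ℝ,
      (σ ∈ maximalMatchings n → ∀ a : EuclideanSpace ℝ (Fin n),
        Tpoly n ({i : Fin n // i < σ i} × Bool) m (fun x => ⟪matchingVec σ x, a⟫)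
          = eval (fun i => a i ^ 2) Qh) ∧
      (σ ∈ maximalMatchings n → ∃ p : Fin n, ∀ mo ∈ Qh.support, mo p = 0) := by
  by_cases hσ : σ ∈ maximalMatchings n
  · rw [maximalMatchings, Finset.mem_filter] at hσ
    obtain ⟨-, hinv', hcard⟩ := hσ
    have hinv : ∀ i, σ (σ i) = i := fun i => by
      have := congrArg (fun τ : Equiv.Perm (Fin n) => τ i) hinv'
      simpa using this
    obtain ⟨p, hp⟩ := Finset.card_eq_one.mp hcard
    have hpfix : σ p = p := by
      have : p ∈ Finset.univ.filter fun i => σ i = i := hp ▸ Finset.mem_singleton_self p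
      exact (Finset.mem_filter.mp this).2
    set Q := Qpoly σ m with hQ
    have hflip : ∀ j : Fin n,
        bind₁ (fun i : Fin n => if i = j then -X i else X i) Q = Q := by
      intro j
      apply MvPolynomial.funext
      intro x
      rw [eval_bind₁']
      have hx : (fun i => eval x (if i = j then -X i else X i : MvPolynomial (Fin n) ℝ))
          = fun i => if i = j then -x j else x i := by
        funext i
        split
        · subst ‹i = j›; simp
        · simp
      rw [hx, hQ, eval_Qpoly, eval_Qpoly, Tpoly_ip_flip m σ hinv j x]
    have heven : ∀ d ∈ Q.support, ∀ j, Even (d j) := by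
      intro d hd j
      rcases Nat.even_or_odd (d j) with h | h
      · exact h
      · exfalso
        have h1 := coeff_bind₁_flip j Q d
        rw [hflip j, Odd.neg_one_pow h, neg_one_mul] at h1
        have h2 : coeff d Q = 0 := by linarith
        exact MvPolynomial.mem_support_iff.mp hd h2
    have hzero : ∀ d ∈ Q.support, d p = 0 := by
      intro d hd
      by_contra hdp
      have hfix : bind₁ (fun i : Fin n => if i = p then 0 else X i) Q = Q := by
        apply MvPolynomial.funext
        intro x
        rw [eval_bind₁']
        have hx : (fun i => eval x (if i = p then 0 else X i : MvPolynomial (Fin n) ℝ))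
            = fun i => if i = p then 0 else x i := by
          funext i; split <;> simp
        rw [hx, hQ, eval_Qpoly, eval_Qpoly, ip_fix σ hinv p hpfix]
      have hc := coeff_bind₁_zero p Q d hdp
      rw [hfix] at hc
      exact MvPolynomial.mem_support_iff.mp hd hc
    refine ⟨halve Q, fun _ a => ?_, fun _ => ⟨p, fun mo hmo => ?_⟩⟩
    · have h1 : (fun x => ⟪matchingVec σ x, a⟫) = ip σ (fun i => a i) := by
        funext x; exact inner_eq_ip σ a x
      rw [h1, ← eval_Qpoly σ m (fun i => a i)]
      exact (eval_halve Q heven (fun i => a i)).symm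
    · obtain ⟨d, hd, rfl⟩ := support_halve Q mo hmo
      rw [Finsupp.mapRange_apply, hzero d hd, Nat.zero_div]
  · exact ⟨0, fun h => absurd h hσ, fun h => absurd h hσ⟩

end ZAux

/-- for `n` odd and `k = n - 1`, the polynomial
`Z_d(a) = Σ_M (-1)^M T_d(φ⁺(M); a)` (sum over maximal matchings `M` of `{1,…,n}`, with
`(-1)^M = (-1)^{cross(M)+p-1}`) is a polynomial in the squares `a_1², …, a_n²`, and
every monomial with nonzero coefficient has at least one exponent equal to zero. -/
theorem Z_poly_in_squares_omits_variable (n m : ℕ) (hodd : Odd n) :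
    ∃ P : MvPolynomial (Fin n) ℝ,
      (∀ a : EuclideanSpace ℝ (Fin n),
        (∑ σ ∈ maximalMatchings n,
          (-1 : ℝ) ^ (matchingCross σ + matchingIsolated σ) *
            Tpoly n ({i : Fin n // i < σ i} × Bool) m
              (fun x => ⟪matchingVec σ x, a⟫)) =
        MvPolynomial.eval (fun i => a i ^ 2) P) ∧
      ∀ mo ∈ P.support, ∃ i, mo i = 0 := by
  classical
  have k := fun σ : Equiv.Perm (Fin n) => ZAux.key m σ
  choose Qh h1 h2 using k
  refine ⟨∑ σ ∈ maximalMatchings n,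
    ((-1 : ℝ) ^ (matchingCross σ + matchingIsolated σ)) • Qh σ, ?_, ?_⟩
  · intro a
    rw [map_sum]
    refine Finset.sum_congr rfl fun σ hσ => ?_
    rw [MvPolynomial.smul_eval, h1 σ hσ a]
  · intro mo hmo
    have hb := MvPolynomial.support_sum hmo
    obtain ⟨σ, hσ, hmo2⟩ := Finset.mem_biUnion.mp hb
    have hmo3 := MvPolynomial.support_smul hmo2
    obtain ⟨p, hp⟩ := h2 σ hσ
    exact ⟨p, hp mo hmo3⟩
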